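/- Let H be a group acting transitively on a nonempty set X. Then H is generated by the union of its point stabilizers H_x (x ∈ X) if and only if there is no H-invariant partition B of X with more than one block such that H acts sharply transitively on B, i.e., such that H acts transitively on the set of blocks of B and the setwise stabilizer in H of each block equals the kernel of the action of H on the set of blocks. -/

import Mathlib

open Pointwise

/-- A group `H` acting transitively on a nonempty set `X` is generated by its point
stabilizers if and only if there is no `H`-invariant partition of `X` with more
than one block on which `H` acts sharply transitively (i.e. `H` is transitive on the
blocks and the setwise stabilizer of each block equals the kernel of the action on the
blocks). -/
theorem closure_stabilizers_eq_top_iff {H X : Type*} [Group H] [MulAction H X] [Nonempty X]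
    (htrans : ∀ x y : X, ∃ h : H, h • x = y) :
    Subgroup.closure (⋃ x : X, (MulAction.stabilizer H x : Set H)) = ⊤ ↔
      ¬ ∃ B : Set (Set X), Setoid.IsPartition B ∧
          (∀ g : H, ∀ b ∈ B, g • b ∈ B) ∧
          B.Nontrivial ∧
          (∀ b₁ ∈ B, ∀ b₂ ∈ B, ∃ g : H, g • b₁ = b₂) ∧
          (∀ b ∈ B, ∀ g : H, g • b = b ↔ ∀ b' ∈ B, g • b' = b') := by
  set N := Subgroup.closure (⋃ x : X, (MulAction.stabilizer H x : Set H)) with hNdef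
  have hstabN : ∀ x : X, (MulAction.stabilizer H x : Set H) ⊆ (N : Set H) := fun x g hg =>
    Subgroup.subset_closure (Set.mem_iUnion.2 ⟨x, hg⟩)
  constructor
  · rintro htop ⟨B, hpart, hinv, ⟨b₁, hb₁, b₂, hb₂, hne⟩, htransB, hsharp⟩
    -- the kernel of the action on blocks
    set K : Subgroup H :=
      { carrier := {g : H | ∀ b ∈ B, g • b = b}
        one_mem' := fun b _ => one_smul H b
        mul_mem' := fun {g h} hg hh b hb => by
          rw [mul_smul, hh b hb, hg b hb]
        inv_mem' := fun {g} hg b hb => by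
          rw [← hg b hb, inv_smul_smul, hg b hb] } with hKdef
    have hNK : N ≤ K := by
      rw [hNdef]
      apply Subgroup.closure_le _ |>.2
      rintro g hg
      obtain ⟨x, hx⟩ := Set.mem_iUnion.1 hg
      -- g fixes x; find the block containing x
      obtain ⟨b, ⟨hbB, hxb⟩, huniq⟩ := hpart.2 x
      have hgb : g • b = b := by
        apply huniq
        refine ⟨hinv g b hbB, ?_⟩
        have : g • x ∈ g • b := Set.smul_mem_smul_set hxb
        rwa [hx] at this
      intro b' hb'
      exact (hsharp b hbB g).1 hgb b' hb'
    have hK : K = ⊤ := top_le_iff.1 (htop ▸ hNK)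
    obtain ⟨g, hg⟩ := htransB b₁ hb₁ b₂ hb₂
    have : g • b₁ = b₁ := (hK ▸ Subgroup.mem_top g : g ∈ K) b₁ hb₁
    exact hne (this.symm.trans hg)
  · intro hno
    by_contra hNtop
    -- N is normal
    have hNnormal : N.Normal := by
      constructor
      intro n hn h
      have : N.map (MulAut.conj h).toMonoidHom ≤ N := by
        rw [hNdef, MonoidHom.map_closure]
        apply Subgroup.closure_le _ |>.2
        rintro g hg
        obtain ⟨g', hg', rfl⟩ := hg
        obtain ⟨x, hx⟩ := Set.mem_iUnion.1 hg'
        apply hstabN (h • x)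
        rw [MulAction.stabilizer_smul_eq_stabilizer_map_conj]
        exact ⟨g', hx, rfl⟩
      exact this ⟨n, hn, rfl⟩
    -- orbits of N under the action on X
    have horb_smul : ∀ (g : H) (x : X),
        g • MulAction.orbit N x = MulAction.orbit N (g • x) := by
      intro g x
      ext y
      constructor
      · rintro ⟨z, ⟨⟨n, hnN⟩, rfl⟩, rfl⟩
        refine ⟨⟨g * n * g⁻¹, hNnormal.conj_mem n hnN g⟩, ?_⟩
        simp [mul_smul]
      · rintro ⟨⟨n, hnN⟩, rfl⟩
        refine ⟨(g⁻¹ * n * g) • x, ⟨⟨g⁻¹ * n * g, ?_⟩, rfl⟩, ?_⟩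
        · simpa using hNnormal.conj_mem n hnN g⁻¹
        · simp [mul_smul]
    have hmem_orbit_N : ∀ (g : H) (x : X), g ∈ N → g • x ∈ MulAction.orbit N x :=
      fun g x hg => ⟨⟨g, hg⟩, rfl⟩
    have horbN : ∀ (g : H) (x : X), g • x ∈ MulAction.orbit N x → g ∈ N := by
      intro g x hgx
      obtain ⟨⟨n, hnN⟩, hn⟩ := hgx
      have hn' : n • x = g • x := hn
      have : n⁻¹ * g ∈ MulAction.stabilizer H x := by
        rw [MulAction.mem_stabilizer_iff, mul_smul, ← hn', inv_smul_smul]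
      have hmem : n⁻¹ * g ∈ N := hstabN x this
      have := N.mul_mem hnN hmem
      rwa [mul_inv_cancel_left] at this
    apply hno
    refine ⟨Set.range (fun x => MulAction.orbit N x), ⟨?_, ?_⟩, ?_, ?_, ?_, ?_⟩
    · rintro ⟨x, hx⟩
      exact (MulAction.nonempty_orbit x).ne_empty hx
    · intro x
      refine ⟨MulAction.orbit N x, ⟨⟨x, rfl⟩, MulAction.mem_orbit_self x⟩, ?_⟩
      rintro b ⟨⟨y, rfl⟩, hxy⟩
      exact (MulAction.orbit_eq_iff.2 hxy).symm
    · rintro g b ⟨x, rfl⟩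
      exact ⟨g • x, (horb_smul g x).symm⟩
    · -- nontriviality
      obtain ⟨h, hh⟩ : ∃ h : H, h ∉ N := by
        by_contra hall
        push_neg at hall
        exact hNtop ((Subgroup.eq_top_iff' N).2 hall)
      obtain ⟨x⟩ := ‹Nonempty X›
      refine ⟨MulAction.orbit N x, ⟨x, rfl⟩, MulAction.orbit N (h • x), ⟨h • x, rfl⟩, ?_⟩
      intro heq
      exact hh (horbN h x (heq ▸ MulAction.mem_orbit_self (h • x)))
    · rintro b₁ ⟨x, rfl⟩ b₂ ⟨y, rfl⟩
      obtain ⟨g, hg⟩ := htrans x y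
      exact ⟨g, by rw [horb_smul, hg]⟩
    · rintro b ⟨x, rfl⟩ g
      constructor
      · intro hgb b' hb'
        obtain ⟨y, rfl⟩ := hb'
        have hgb' : g • MulAction.orbit N x = MulAction.orbit N x := hgb
        have hgN : g ∈ N := by
          apply horbN g x
          rw [← hgb', horb_smul]
          exact MulAction.mem_orbit_self (g • x)
        show g • MulAction.orbit N y = MulAction.orbit N y
        rw [horb_smul]
        exact MulAction.orbit_eq_iff.2 (hmem_orbit_N g y hgN)
      · intro hall
        exact hall _ ⟨x, rfl⟩
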